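/- Let n ≥ 2 be a natural number, K > 0 and B real numbers, λ : Fin n → ℝ, and M : Fin n → Fin n → ℝ a symmetric array (M i j = M j i) such that M i j ≤ −K whenever i ≠ j, and such that for every index i the row sum ∑_{j ≠ i} M i j is at least −B. Then ∑_i ∑_{j ≠ i} M i j · λ i · λ j ≤ (B − (n−2)·K) · ∑_i (λ i)². -/

import Mathlib

/-- Pointwise algebraic core of Koiso's coercivity estimate: if the symmetric
array `M` has off-diagonal entries `≤ -K < 0` and row sums (over `j ≠ i`)
bounded below by `-B`, then `∑_{i ≠ j} M i j · λ i · λ j ≤ (B - (n-2)K) ∑ λ i²`. -/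
theorem koiso_curvature_term_bound (n : ℕ) (hn : 2 ≤ n) (K B : ℝ) (hK : 0 < K)
    (lam : Fin n → ℝ) (M : Fin n → Fin n → ℝ)
    (hsym : ∀ i j, M i j = M j i)
    (hoff : ∀ i j, i ≠ j → M i j ≤ -K)
    (hrow : ∀ i, -B ≤ ∑ j ∈ Finset.univ.erase i, M i j) :
    ∑ i, ∑ j ∈ Finset.univ.erase i, M i j * lam i * lam j ≤
      (B - ((n : ℝ) - 2) * K) * ∑ i, lam i ^ 2 := by
  classical
  set S := ∑ i, lam i ^ 2 with hSdef
  set T := ∑ i, lam i with hTdef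
  have hS : (0:ℝ) ≤ S := Finset.sum_nonneg fun i _ => sq_nonneg _
  set N : Fin n → Fin n → ℝ := fun i j => if i = j then 0 else M i j with hNdef
  have hNsym : ∀ i j, N i j = N j i := by
    intro i j
    by_cases h : i = j
    · simp [hNdef, h]
    · simp only [hNdef, if_neg h, if_neg (Ne.symm h)]; exact hsym i j
  have hNrow : ∀ i, -B ≤ ∑ j, N i j := by
    intro i
    have h0 : ∑ j ∈ Finset.univ.erase i, N i j = ∑ j, N i j :=
      Finset.sum_erase _ (by simp [hNdef])
    rw [← h0]
    calc -B ≤ ∑ j ∈ Finset.univ.erase i, M i j := hrow i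
      _ = ∑ j ∈ Finset.univ.erase i, N i j := by
        apply Finset.sum_congr rfl
        intro j hj
        rw [Finset.mem_erase] at hj
        simp only [hNdef, if_neg (Ne.symm hj.1)]
  have hLHS : ∑ i, ∑ j ∈ Finset.univ.erase i, M i j * lam i * lam j
      = ∑ i, ∑ j, N i j * lam i * lam j := by
    apply Finset.sum_congr rfl
    intro i _
    rw [← Finset.sum_erase (Finset.univ) (a := i) (f := fun j => N i j * lam i * lam j)
      (by simp [hNdef])]
    apply Finset.sum_congr rfl
    intro j hj
    rw [Finset.mem_erase] at hj
    simp only [hNdef, if_neg (Ne.symm hj.1)]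
  rw [hLHS]
  have hdecomp : ∑ i, ∑ j, N i j * lam i * lam j
      = (∑ i, ∑ j, N i j * (lam i + lam j)^2 / 2)
        - (∑ i, ∑ j, N i j * lam i ^ 2 / 2)
        - (∑ i, ∑ j, N i j * lam j ^ 2 / 2) := by
    rw [← Finset.sum_sub_distrib, ← Finset.sum_sub_distrib]
    apply Finset.sum_congr rfl
    intro i _
    rw [← Finset.sum_sub_distrib, ← Finset.sum_sub_distrib]
    apply Finset.sum_congr rfl
    intro j _
    ring
  rw [hdecomp]
  -- Term A
  have hA : (∑ i, ∑ j, N i j * (lam i + lam j)^2 / 2)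
      ≤ -K * ((n:ℝ)*S + T^2) + 2*K*S := by
    have step1 : (∑ i, ∑ j, N i j * (lam i + lam j)^2 / 2)
        ≤ ∑ i, ∑ j, (if i = j then (0:ℝ) else -K) * (lam i + lam j)^2 / 2 := by
      apply Finset.sum_le_sum
      intro i _
      apply Finset.sum_le_sum
      intro j _
      by_cases h : i = j
      · simp [hNdef, h]
      · simp only [hNdef, if_neg h]
        have h1 := hoff i j h
        nlinarith [sq_nonneg (lam i + lam j)]
    have step2 : ∑ i, ∑ j, (if i = j then (0:ℝ) else -K) * (lam i + lam j)^2 / 2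
        = (∑ i, ∑ j, (-K) * (lam i + lam j)^2 / 2)
          - ∑ i, (-K) * (lam i + lam i)^2 / 2 := by
      rw [← Finset.sum_sub_distrib]
      apply Finset.sum_congr rfl
      intro i _
      have : ∀ j, (if i = j then (0:ℝ) else -K) * (lam i + lam j)^2 / 2
          = (-K) * (lam i + lam j)^2 / 2
            - (if i = j then (-K) * (lam i + lam j)^2 / 2 else 0) := by
        intro j
        by_cases h : i = j <;> simp [h]
      simp_rw [this]
      rw [Finset.sum_sub_distrib, Finset.sum_ite_eq]
      simp
    have hsq : ∑ i, ∑ j, (lam i + lam j)^2 = 2*(n:ℝ)*S + 2*T^2 := by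
      have h1 : ∑ i : Fin n, ∑ _j : Fin n, lam i ^ 2 = (n:ℝ) * S := by
        simp [Finset.sum_const, Finset.card_univ, nsmul_eq_mul, Finset.mul_sum]
        rw [← Finset.mul_sum]
      have h2 : ∑ i : Fin n, ∑ j : Fin n, lam i * lam j = T * T := by
        have : ∀ i, ∑ j : Fin n, lam i * lam j = lam i * T := by
          intro i; rw [← Finset.mul_sum]
        simp_rw [this]
        rw [← Finset.sum_mul]
      have h3 : ∑ _i : Fin n, ∑ j : Fin n, lam j ^ 2 = (n:ℝ) * S := by
        simp [Finset.sum_const, Finset.card_univ, nsmul_eq_mul]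
        exact Or.inl hSdef.symm
      have e : ∑ i, ∑ j, (lam i + lam j)^2
          = (∑ i : Fin n, ∑ _j : Fin n, lam i ^ 2)
            + 2 * (∑ i : Fin n, ∑ j : Fin n, lam i * lam j)
            + (∑ _i : Fin n, ∑ j : Fin n, lam j ^ 2) := by
        rw [Finset.mul_sum, ← Finset.sum_add_distrib, ← Finset.sum_add_distrib]
        apply Finset.sum_congr rfl
        intro i _
        rw [Finset.mul_sum, ← Finset.sum_add_distrib, ← Finset.sum_add_distrib]
        apply Finset.sum_congr rfl
        intro j _
        ring
      rw [e, h1, h2, h3]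
      ring
    have hdiag : ∑ i, (-K) * (lam i + lam i)^2 / 2 = -2*K*S := by
      have : ∀ i, (-K) * (lam i + lam i)^2 / 2 = (-2*K) * lam i^2 := fun i => by ring
      simp_rw [this]
      rw [← Finset.mul_sum, ← hSdef]
    calc (∑ i, ∑ j, N i j * (lam i + lam j)^2 / 2)
        ≤ ∑ i, ∑ j, (if i = j then (0:ℝ) else -K) * (lam i + lam j)^2 / 2 := step1
      _ = (∑ i, ∑ j, (-K) * (lam i + lam j)^2 / 2) - ∑ i, (-K) * (lam i + lam i)^2 / 2 := step2
      _ = (-K) * (∑ i, ∑ j, (lam i + lam j)^2) / 2 - (-2*K*S) := by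
          rw [hdiag]
          congr 1
          rw [Finset.mul_sum, Finset.sum_div]
          apply Finset.sum_congr rfl
          intro i _
          rw [Finset.mul_sum, Finset.sum_div]
      _ = -K * ((n:ℝ)*S + T^2) + 2*K*S := by rw [hsq]; ring
  -- Term B
  have hB : -(∑ i, ∑ j, N i j * lam i ^ 2 / 2) ≤ B * S / 2 := by
    have : ∀ i, ∑ j, N i j * lam i ^ 2 / 2 = (∑ j, N i j) * (lam i ^ 2 / 2) := by
      intro i
      rw [Finset.sum_mul]
      apply Finset.sum_congr rfl
      intro j _
      ring
    simp_rw [this]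
    have key : ∑ i, (-B) * (lam i ^ 2 / 2) ≤ ∑ i, (∑ j, N i j) * (lam i ^ 2 / 2) := by
      apply Finset.sum_le_sum
      intro i _
      apply mul_le_mul_of_nonneg_right (hNrow i) (by positivity)
    have : ∑ i, (-B) * (lam i ^ 2 / 2) = -(B * S / 2) := by
      rw [← Finset.mul_sum]
      rw [show (∑ i, lam i ^ 2 / 2) = S / 2 by rw [← Finset.sum_div, ← hSdef]]
      ring
    linarith [this ▸ key]
  -- Term C
  have hC : -(∑ i, ∑ j, N i j * lam j ^ 2 / 2) ≤ B * S / 2 := by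
    have hcomm : ∑ i, ∑ j, N i j * lam j ^ 2 / 2 = ∑ j, ∑ i, N i j * lam j ^ 2 / 2 :=
      Finset.sum_comm
    rw [hcomm]
    have : ∀ j, ∑ i, N i j * lam j ^ 2 / 2 = (∑ i, N j i) * (lam j ^ 2 / 2) := by
      intro j
      rw [Finset.sum_mul]
      apply Finset.sum_congr rfl
      intro i _
      rw [hNsym i j]
      ring
    simp_rw [this]
    have key : ∑ j, (-B) * (lam j ^ 2 / 2) ≤ ∑ j, (∑ i, N j i) * (lam j ^ 2 / 2) := by
      apply Finset.sum_le_sum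
      intro j _
      apply mul_le_mul_of_nonneg_right (hNrow j) (by positivity)
    have heq : ∑ j, (-B) * (lam j ^ 2 / 2) = -(B * S / 2) := by
      rw [← Finset.mul_sum]
      rw [show (∑ j, lam j ^ 2 / 2) = S / 2 by rw [← Finset.sum_div, ← hSdef]]
      ring
    linarith [heq ▸ key]
  nlinarith [sq_nonneg T, hK.le, hS]
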